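/- arXiv:2011.07381 — 4 statements merged into one kernel-verified Lean document; each statement's English description precedes it below -/
import Mathlib

section
/- Let $M_1, \ldots, M_n$ be rank-one $C_2^k$-lattices (each $M_i \cong \mathbb{Z}$ with action given by a character $\rho_i: C_2^k \to \{\pm 1\}$), set $N = M_1 \oplus \cdots \oplus M_n$, and let $f: N \to M$ be a $C_2^k$-module homomorphism into a $C_2^k$-module $M$ whose underlying group is free abelian. Let $e_i$ generate $M_i$. Suppose for some $i$ there exist a nonzero integer $b$, an integer $t \geq 2$, indices $i_1, \ldots, i_t$, nonzero integers $a_{i_1}, \ldots, a_{i_t}$, and a linearly independent family $f(e_{i_1}), \ldots, f(e_{i_t})$ with $b f(e_i) = a_{i_1} f(e_{i_1}) + \cdots + a_{i_t} f(e_{i_t})$. Then $\ker(\rho_{i_1}) = \cdots = \ker(\rho_{i_t})$. -/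
/-- Let `N = M₁ ⊕ ⋯ ⊕ Mₙ` be a sum of rank-one `C₂ᵏ`-lattices with
characters `ρᵢ`, and let `f : N → M` be a `C₂ᵏ`-equivariant homomorphism into a
`C₂ᵏ`-module whose underlying group is free abelian.  If for some `i` there are
`b ≠ 0`, `t ≥ 2`, indices `ι`, nonzero integers `a_z`, and a linearly independent
family `f(e_{ι z})` with `b f(eᵢ) = Σ a_z f(e_{ι z})`, then all the kernels
`ker ρ_{ι z}` coincide. -/
theorem stmt7 (k n : ℕ) (ρ : Fin n → (Multiplicative (Fin k → ZMod 2) →* ℤˣ))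
    (M : Type*) [AddCommGroup M] [Module ℤ M] [Module.Free ℤ M]
    (σ : Multiplicative (Fin k → ZMod 2) →* (M ≃ₗ[ℤ] M))
    (f : (Fin n → ℤ) →ₗ[ℤ] M)
    (hf : ∀ (g : Multiplicative (Fin k → ZMod 2)) (v : Fin n → ℤ),
      f (fun j => (ρ j g : ℤ) * v j) = σ g (f v))
    (i : Fin n) (b : ℤ) (hb : b ≠ 0) (t : ℕ) (ht : 2 ≤ t)
    (ι : Fin t → Fin n) (a : Fin t → ℤ) (ha : ∀ z, a z ≠ 0)
    (hli : LinearIndependent ℤ (fun z : Fin t => f (Pi.single (ι z) 1)))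
    (hrel : b • f (Pi.single i 1) = ∑ z : Fin t, a z • f (Pi.single (ι z) 1)) :
    ∀ z w : Fin t, (ρ (ι z)).ker = (ρ (ι w)).ker := by
  have hsig : ∀ (g : Multiplicative (Fin k → ZMod 2)) (c : Fin n),
      σ g (f (Pi.single c 1)) = (ρ c g : ℤ) • f (Pi.single c 1) := by
    intro g c
    rw [← hf g]
    have hv : (fun j => ((ρ j g : ℤ)) * (Pi.single c 1 : Fin n → ℤ) j) = (ρ c g : ℤ) • Pi.single c (1:ℤ) := by
      funext j
      rcases eq_or_ne j c with rfl | h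
      · simp
      · simp [Pi.single_apply, h]
    rw [hv]
    simp only [← Int.cast_smul_eq_zsmul ℤ, Int.cast_id]
    exact f.map_smul _ _
  simp only [← Int.cast_smul_eq_zsmul ℤ, Int.cast_id] at hrel hsig
  have key : ∀ (g : Multiplicative (Fin k → ZMod 2)) (z : Fin t),
      ((ρ (ι z) g : ℤ)) = (ρ i g : ℤ) := by
    intro g z
    have h1 := congrArg (σ g) hrel
    rw [(σ g).map_smul, map_sum, hsig] at h1
    simp only [(σ g).map_smul, hsig] at h1
    have h2 := congrArg (fun m => (ρ i g : ℤ) • m) hrel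
    simp only [← Int.cast_smul_eq_zsmul ℤ, Int.cast_id] at h2
    rw [Finset.smul_sum] at h2
    simp only [@smul_smul ℤ M _ DistribMulAction.toMulAction] at h1 h2
    rw [mul_comm] at h2
    have heq := h1.symm.trans h2
    have h3 : ∑ z : Fin t, (a z * (ρ (ι z) g : ℤ) - (ρ i g : ℤ) * a z) • f (Pi.single (ι z) 1)
        = 0 := by
      simp only [← Int.cast_smul_eq_zsmul ℤ, Int.cast_id]
      simp only [sub_smul, Finset.sum_sub_distrib, heq, sub_self]
    simp only [← Int.cast_smul_eq_zsmul ℤ, Int.cast_id] at h3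
    have h4 := Fintype.linearIndependent_iff.mp hli
      (fun z => a z * (ρ (ι z) g : ℤ) - (ρ i g : ℤ) * a z) h3 z
    have h5 : a z * (ρ (ι z) g : ℤ) = a z * (ρ i g : ℤ) := by
      have := sub_eq_zero.mp h4
      linarith [this]
    exact mul_left_cancel₀ (ha z) h5
  intro z w
  have : ρ (ι z) = ρ (ι w) := by
    refine MonoidHom.ext fun g => ?_
    have h := (key g z).trans (key g w).symm
    exact_mod_cast h
  rw [this]
end

section
/- The group $\Delta_P = \langle x, y \mid x^{-1} y^2 x y^2 = 1,\ y^{-1} x^2 y x^2 = 1 \rangle$ (the Promislow/Hantzsche-Wendt group) is torsion-free. -/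
section GenHelpers
variable {G : Type*} [Group G] (x y : G)

lemma conj_inv_h {g u v : G} (h : g*u*g⁻¹ = v) : g*u⁻¹*g⁻¹ = v⁻¹ := by
  calc g*u⁻¹*g⁻¹ = (g*u*g⁻¹)⁻¹ := by group
  _ = v⁻¹ := by rw [h]

lemma conj_side_h {g u : G} (h : g*u*g⁻¹ = u⁻¹) : g⁻¹*u*g = u⁻¹ := by
  have e2 : g*u⁻¹*g⁻¹ = u := by rw [conj_inv_h h, inv_inv]
  have e3 : g⁻¹*(g*u⁻¹*g⁻¹)*g = u⁻¹ := by group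
  rw [e2] at e3; exact e3

variable (h1 : x⁻¹*y^2*x*y^2 = 1) (h2 : y⁻¹*x^2*y*x^2 = 1)
include h1 h2

omit h2 in
lemma rp : x⁻¹*y^2*x = (y^2)⁻¹ := mul_eq_one_iff_eq_inv.mp h1
omit h1 in
lemma rq : y⁻¹*x^2*y = (x^2)⁻¹ := mul_eq_one_iff_eq_inv.mp h2

lemma rp2 : x*(y^2)⁻¹*x⁻¹ = y^2 := by
  have e : x*(x⁻¹*y^2*x)*x⁻¹ = y^2 := by group
  rw [rp x y h1] at e; exact e

lemma rp3 : x*y^2*x⁻¹ = (y^2)⁻¹ := by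
  have e := conj_inv_h (rp2 x y h1 h2); rwa [inv_inv] at e

lemma rq2 : y*(x^2)⁻¹*y⁻¹ = x^2 := by
  have e : y*(y⁻¹*x^2*y)*y⁻¹ = x^2 := by group
  rw [rq x y h2] at e; exact e

lemma rq3 : y*x^2*y⁻¹ = (x^2)⁻¹ := by
  have e := conj_inv_h (rq2 x y h1 h2); rwa [inv_inv] at e

lemma sqa : x^2*y = y*(x^2)⁻¹ := by
  have e : y*(y⁻¹*x^2*y) = x^2*y := by group
  rw [rq x y h2] at e; exact e.symm

lemma spb : y^2*x = x*(y^2)⁻¹ := by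
  have e : x*(x⁻¹*y^2*x) = y^2*x := by group
  rw [rp x y h1] at e; exact e.symm

lemma spb' : y^2*x⁻¹ = x⁻¹*(y^2)⁻¹ := by
  have e : x⁻¹*(x*y^2*x⁻¹) = y^2*x⁻¹ := by group
  rw [rp3 x y h1 h2] at e; exact e.symm

lemma sqa' : x^2*y⁻¹ = y⁻¹*(x^2)⁻¹ := by
  have e : y⁻¹*(y*x^2*y⁻¹) = x^2*y⁻¹ := by group
  rw [rq3 x y h1 h2] at e; exact e.symm

lemma rF1 : x*(x*y)^2*x⁻¹ = ((x*y)^2)⁻¹ := by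
  calc x*(x*y)^2*x⁻¹ = (x^2*y)*(x*y*x⁻¹) := by (try simp only [pow_two]); group
  _ = (y*(x^2)⁻¹)*(x*y*x⁻¹) := by rw [sqa x y h1 h2]
  _ = y⁻¹*((y^2*x⁻¹)*y*x⁻¹) := by (try simp only [pow_two]); group
  _ = y⁻¹*((x⁻¹*(y^2)⁻¹)*y*x⁻¹) := by rw [spb' x y h1 h2]
  _ = ((x*y)^2)⁻¹ := by (try simp only [pow_two]); group

lemma rF2 : y*(x*y)^2*y⁻¹ = ((x*y)^2)⁻¹ := by
  calc y*(x*y)^2*y⁻¹ = y⁻¹*((y^2*x)*y*x) := by (try simp only [pow_two]); group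
  _ = y⁻¹*((x*(y^2)⁻¹)*y*x) := by rw [spb x y h1 h2]
  _ = y⁻¹*x⁻¹*((x^2*y⁻¹)*x) := by (try simp only [pow_two]); group
  _ = y⁻¹*x⁻¹*((y⁻¹*(x^2)⁻¹)*x) := by rw [sqa' x y h1 h2]
  _ = ((x*y)^2)⁻¹ := by (try simp only [pow_two]); group

lemma cab : x^2*y^2 = y^2*x^2 := by
  have e : x*(x*y^2*x⁻¹)*x⁻¹ = y^2 := by rw [rp3 x y h1 h2]; exact rp2 x y h1 h2
  calc x^2*y^2 = (x*(x*y^2*x⁻¹)*x⁻¹)*x^2 := by (try simp only [pow_two]); group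
  _ = y^2*x^2 := by rw [e]

lemma cac : x^2*(x*y)^2 = (x*y)^2*x^2 := by
  have e : x*(x*(x*y)^2*x⁻¹)*x⁻¹ = (x*y)^2 := by
    rw [rF1 x y h1 h2]
    have := conj_inv_h (rF1 x y h1 h2); rwa [inv_inv] at this
  calc x^2*(x*y)^2 = (x*(x*(x*y)^2*x⁻¹)*x⁻¹)*x^2 := by (try simp only [pow_two]); group
  _ = (x*y)^2*x^2 := by rw [e]

lemma cbc : y^2*(x*y)^2 = (x*y)^2*y^2 := by
  have e : y*(y*(x*y)^2*y⁻¹)*y⁻¹ = (x*y)^2 := by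
    rw [rF2 x y h1 h2]
    have := conj_inv_h (rF2 x y h1 h2); rwa [inv_inv] at this
  calc y^2*(x*y)^2 = (y*(y*(x*y)^2*y⁻¹)*y⁻¹)*y^2 := by (try simp only [pow_two]); group
  _ = (x*y)^2*y^2 := by rw [e]

lemma rF1' : x⁻¹*(x*y)^2*x = ((x*y)^2)⁻¹ := conj_side_h (rF1 x y h1 h2)
lemma rF2' : y⁻¹*(x*y)^2*y = ((x*y)^2)⁻¹ := conj_side_h (rF2 x y h1 h2)
lemma rp' : x⁻¹*y^2*x = (y^2)⁻¹ := conj_side_h (rp3 x y h1 h2)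
lemma rq' : y⁻¹*x^2*y = (x^2)⁻¹ := conj_side_h (rq3 x y h1 h2)

lemma rzp : (x*y)*x^2*(x*y)⁻¹ = (x^2)⁻¹ := by
  have e : x*(y*x^2*y⁻¹)*x⁻¹ = (x*y)*x^2*(x*y)⁻¹ := by (try simp only [pow_two]); group
  rw [rq3 x y h1 h2] at e
  rw [← e]
  have e2 : x*(x^2)⁻¹*x⁻¹ = (x^2)⁻¹ := by (try simp only [pow_two]); group
  exact e2

lemma rzq : (x*y)*y^2*(x*y)⁻¹ = (y^2)⁻¹ := by
  have e : x*(y*y^2*y⁻¹)*x⁻¹ = (x*y)*y^2*(x*y)⁻¹ := by (try simp only [pow_two]); group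
  have e1 : y*y^2*y⁻¹ = y^2 := by (try simp only [pow_two]); group
  rw [e1] at e
  rw [← e]; exact rp3 x y h1 h2

lemma rzp' : (x*y)⁻¹*x^2*(x*y) = (x^2)⁻¹ := conj_side_h (rzp x y h1 h2)
lemma rzq' : (x*y)⁻¹*y^2*(x*y) = (y^2)⁻¹ := conj_side_h (rzq x y h1 h2)

end GenHelpers

namespace DPAux
variable {G : Type*} [Group G] (P Q R : G)

def genA (i j k : ℤ) : G := P^i * Q^j * R^k

variable (hab : Commute P Q) (hac : Commute P R) (hbc : Commute Q R)

include hab hac hbc in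
lemma Amul (i j k i' j' k' : ℤ) :
    genA P Q R i j k * genA P Q R i' j' k' = genA P Q R (i+i') (j+j') (k+k') := by
  have h2 : ∀ t : G, R^k*(P^i'*t) = P^i'*(R^k*t) := fun t => by
    rw [← mul_assoc, (hac.symm.zpow_zpow k i').eq, mul_assoc]
  have h3 : ∀ t : G, Q^j*(P^i'*t) = P^i'*(Q^j*t) := fun t => by
    rw [← mul_assoc, (hab.symm.zpow_zpow j i').eq, mul_assoc]
  have h4 : R^k*(Q^j'*R^k') = Q^j'*(R^k*R^k') := by
    rw [← mul_assoc, (hbc.symm.zpow_zpow k j').eq, mul_assoc]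
  simp only [genA, zpow_add, mul_assoc, h2, h3, h4]

include hab hac hbc in
lemma Apow (n : ℕ) (i j k : ℤ) :
    (genA P Q R i j k)^n = genA P Q R (n*i) (n*j) (n*k) := by
  induction n with
  | zero => simp [genA]
  | succ m ih =>
    rw [pow_succ, ih, Amul P Q R hab hac hbc]
    congr 1 <;> push_cast <;> ring

lemma Aone : genA P Q R 0 0 0 = 1 := by simp [genA]

lemma Aconj (g : G) (e1 e2 e3 i j k : ℤ)
    (hP : g*P*g⁻¹ = P^e1) (hQ : g*Q*g⁻¹ = Q^e2) (hR : g*R*g⁻¹ = R^e3) :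
    g * genA P Q R i j k * g⁻¹ = genA P Q R (e1*i) (e2*j) (e3*k) := by
  have e : (MulAut.conj g) (genA P Q R i j k) = genA P Q R (e1*i) (e2*j) (e3*k) := by
    simp only [genA, map_mul, map_zpow, MulAut.conj_apply, hP, hQ, hR, ← zpow_mul]
  simpa only [MulAut.conj_apply] using e

end DPAux

/-- The defining relations of the Promislow (Hantzsche–Wendt) group
`Δ_P = ⟨x, y ∣ x⁻¹y²xy² = 1, y⁻¹x²yx² = 1⟩`. -/
def deltaPRels : Set (FreeGroup (Fin 2)) :=
  {(FreeGroup.of 0)⁻¹ * (FreeGroup.of 1) ^ 2 * FreeGroup.of 0 * (FreeGroup.of 1) ^ 2,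
   (FreeGroup.of 1)⁻¹ * (FreeGroup.of 0) ^ 2 * FreeGroup.of 1 * (FreeGroup.of 0) ^ 2}

namespace Stmt8Aux

abbrev V := ℚ × ℚ × ℚ

def xhat : Equiv.Perm V where
  toFun v := (v.1 + 1/2, -v.2.1 + 1/2, -v.2.2)
  invFun v := (v.1 - 1/2, -v.2.1 + 1/2, -v.2.2)
  left_inv v := by simp
  right_inv v := by simp

def yhat : Equiv.Perm V where
  toFun v := (-v.1, v.2.1 + 1/2, -v.2.2 + 1/2)
  invFun v := (-v.1, v.2.1 - 1/2, -v.2.2 + 1/2)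
  left_inv v := by simp
  right_inv v := by simp

lemma hrels : ∀ r ∈ deltaPRels, FreeGroup.lift ![xhat, yhat] r = 1 := by
  rintro r (rfl | rfl) <;>
  · simp only [map_mul, map_inv, map_pow, FreeGroup.lift_apply_of, Matrix.cons_val_zero,
      Matrix.cons_val_one, Matrix.head_cons]
    ext v <;>
      simp [xhat, yhat, pow_two, Equiv.Perm.mul_apply, Equiv.Perm.inv_def, Equiv.symm]

abbrev Δ := PresentedGroup deltaPRels

def φ : Δ →* Equiv.Perm V := PresentedGroup.toGroup hrels

def X : Δ := PresentedGroup.of 0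
def Y : Δ := PresentedGroup.of 1

lemma φX : φ X = xhat := PresentedGroup.toGroup.of hrels
lemma φY : φ Y = yhat := PresentedGroup.toGroup.of hrels

lemma φa : φ (X^2) = Equiv.addLeft ((1:ℚ), (0:ℚ), (0:ℚ)) := by
  rw [map_pow, φX]; ext v <;> simp [xhat, pow_two, Equiv.Perm.mul_apply] <;> ring

lemma φb : φ (Y^2) = Equiv.addLeft ((0:ℚ), (1:ℚ), (0:ℚ)) := by
  rw [map_pow, φY]; ext v <;> simp [yhat, pow_two, Equiv.Perm.mul_apply] <;> ring

lemma φc : φ ((X*Y)^2) = Equiv.addLeft ((0:ℚ), (0:ℚ), (-1:ℚ)) := by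
  rw [map_pow, map_mul, φX, φY]
  ext v <;> simp [xhat, yhat, pow_two, Equiv.Perm.mul_apply] <;> ring

noncomputable def A : ℤ → ℤ → ℤ → Δ := DPAux.genA (X^2) (Y^2) ((X*Y)^2)

lemma keyA {i j k : ℤ} (h : A i j k = 1) : i = 0 ∧ j = 0 ∧ k = 0 := by
  have e := congrArg φ h
  rw [A, DPAux.genA, map_mul, map_mul, map_zpow, map_zpow, map_zpow, φa, φb, φc, map_one] at e
  simp only [Equiv.zsmul_addLeft, ← Equiv.addLeft_add] at e
  have e2 := congrArg (fun p => p ((0:ℚ),(0:ℚ),(0:ℚ))) e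
  simp [Prod.ext_iff, Prod.smul_def, smul_eq_mul] at e2
  obtain ⟨hi, hj, hk⟩ := e2
  refine ⟨?_, ?_, ?_⟩ <;> exact_mod_cast ‹_›

lemma rel1 : X⁻¹*Y^2*X*Y^2 = 1 := by
  have h : PresentedGroup.mk deltaPRels
      ((FreeGroup.of 0)⁻¹ * (FreeGroup.of 1) ^ 2 * FreeGroup.of 0 * (FreeGroup.of 1) ^ 2) = 1 :=
    (QuotientGroup.eq_one_iff _).mpr
      (Subgroup.subset_normalClosure (Set.mem_insert _ _))
  simp only [map_mul, map_inv, map_pow] at h; exact h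

lemma rel2 : Y⁻¹*X^2*Y*X^2 = 1 := by
  have h : PresentedGroup.mk deltaPRels
      ((FreeGroup.of 1)⁻¹ * (FreeGroup.of 0) ^ 2 * FreeGroup.of 1 * (FreeGroup.of 0) ^ 2) = 1 :=
    (QuotientGroup.eq_one_iff _).mpr
      (Subgroup.subset_normalClosure (Set.mem_insert_of_mem _ rfl))
  simp only [map_mul, map_inv, map_pow] at h; exact h

lemma hab : Commute (X^2) (Y^2) := cab X Y rel1 rel2
lemma hac : Commute (X^2) ((X*Y)^2) := cac X Y rel1 rel2
lemma hbc : Commute (Y^2) ((X*Y)^2) := cbc X Y rel1 rel2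

lemma AmulΔ (i j k i' j' k' : ℤ) :
    A i j k * A i' j' k' = A (i+i') (j+j') (k+k') :=
  DPAux.Amul _ _ _ hab hac hbc i j k i' j' k'

lemma ApowΔ (n : ℕ) (i j k : ℤ) : (A i j k)^n = A (n*i) (n*j) (n*k) :=
  DPAux.Apow _ _ _ hab hac hbc n i j k

lemma AoneΔ : A 0 0 0 = 1 := DPAux.Aone _ _ _

lemma hA100 : X^2 = A 1 0 0 := by simp [A, DPAux.genA]
lemma hA010 : Y^2 = A 0 1 0 := by simp [A, DPAux.genA]
lemma hA001 : (X*Y)^2 = A 0 0 1 := by simp [A, DPAux.genA]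

-- conjugation by X⁻¹, Y⁻¹, (X*Y)⁻¹ on A
lemma cXi (i j k : ℤ) : X⁻¹ * A i j k * X = A i (-j) (-k) := by
  have h := DPAux.Aconj (X^2) (Y^2) ((X*Y)^2) X⁻¹ 1 (-1) (-1) i j k
    (by rw [inv_inv, zpow_one]; (try simp only [pow_two]); group)
    (by rw [inv_inv, zpow_neg_one]; exact rp' X Y rel1 rel2)
    (by rw [inv_inv, zpow_neg_one]; exact rF1' X Y rel1 rel2)
  rw [inv_inv] at h
  simpa [A] using h

lemma cYi (i j k : ℤ) : Y⁻¹ * A i j k * Y = A (-i) j (-k) := by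
  have h := DPAux.Aconj (X^2) (Y^2) ((X*Y)^2) Y⁻¹ (-1) 1 (-1) i j k
    (by rw [inv_inv, zpow_neg_one]; exact rq' X Y rel1 rel2)
    (by rw [inv_inv, zpow_one]; (try simp only [pow_two]); group)
    (by rw [inv_inv, zpow_neg_one]; exact rF2' X Y rel1 rel2)
  rw [inv_inv] at h
  simpa [A] using h

lemma cZi (i j k : ℤ) : (X*Y)⁻¹ * A i j k * (X*Y) = A (-i) (-j) k := by
  have h := DPAux.Aconj (X^2) (Y^2) ((X*Y)^2) (X*Y)⁻¹ (-1) (-1) 1 i j k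
    (by rw [inv_inv, zpow_neg_one]; exact rzp' X Y rel1 rel2)
    (by rw [inv_inv, zpow_neg_one]; exact rzq' X Y rel1 rel2)
    (by rw [inv_inv, zpow_one]; (try simp only [pow_two]); group)
  rw [inv_inv] at h
  simpa [A] using h

noncomputable def H : Subgroup Δ := Subgroup.closure {X^2, Y^2, (X*Y)^2}

lemma repH : ∀ h ∈ H, ∃ i j k : ℤ, h = A i j k := by
  intro h hh
  induction hh using Subgroup.closure_induction with
  | mem s hs =>
    rcases hs with rfl | rfl | rfl
    · exact ⟨1, 0, 0, hA100⟩
    · exact ⟨0, 1, 0, hA010⟩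
    · exact ⟨0, 0, 1, hA001⟩
  | one => exact ⟨0, 0, 0, AoneΔ.symm⟩
  | mul u v hu hv ihu ihv =>
    obtain ⟨i, j, k, rfl⟩ := ihu
    obtain ⟨i', j', k', rfl⟩ := ihv
    exact ⟨i+i', j+j', k+k', AmulΔ i j k i' j' k'⟩
  | inv u hu ihu =>
    obtain ⟨i, j, k, rfl⟩ := ihu
    refine ⟨-i, -j, -k, ?_⟩
    rw [inv_eq_iff_mul_eq_one, AmulΔ]
    simpa using AoneΔ

lemma conj_mem_H (g : Δ)
    (hgen : ∀ s ∈ ({X^2, Y^2, (X*Y)^2} : Set Δ), g*s*g⁻¹ ∈ H) :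
    ∀ h ∈ H, g*h*g⁻¹ ∈ H := by
  intro h hh
  induction hh using Subgroup.closure_induction with
  | mem s hs => exact hgen s hs
  | one => simpa using H.one_mem
  | mul u v hu hv ihu ihv =>
    have e : g*(u*v)*g⁻¹ = (g*u*g⁻¹)*(g*v*g⁻¹) := by group
    rw [e]; exact H.mul_mem ihu ihv
  | inv u hu ihu =>
    have e : g*u⁻¹*g⁻¹ = (g*u*g⁻¹)⁻¹ := by group
    rw [e]; exact H.inv_mem ihu

lemma genH : ∀ s ∈ ({X^2, Y^2, (X*Y)^2} : Set Δ), s ∈ H :=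
  fun s hs => Subgroup.subset_closure hs

lemma X_mem_norm : X ∈ Subgroup.normalizer (H : Set Δ) := by
  rw [Subgroup.mem_normalizer_iff]
  intro h
  constructor
  · intro hh
    refine conj_mem_H X ?_ h hh
    rintro s (rfl | rfl | rfl)
    · rw [show X*X^2*X⁻¹ = X^2 by (try simp only [pow_two]); group]
      exact genH _ (by simp)
    · rw [rp3 X Y rel1 rel2]; exact H.inv_mem (genH _ (by simp))
    · rw [rF1 X Y rel1 rel2]; exact H.inv_mem (genH _ (by simp))
  · intro hh
    have h2 := conj_mem_H X⁻¹ ?_ _ hh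
    · rw [show X⁻¹*(X*h*X⁻¹)*X⁻¹⁻¹ = h by group] at h2
      exact h2
    · rintro s (rfl | rfl | rfl)
      · rw [show X⁻¹*X^2*X⁻¹⁻¹ = X^2 by (try simp only [pow_two]); group]
        exact genH _ (by simp)
      · rw [inv_inv, rp' X Y rel1 rel2]; exact H.inv_mem (genH _ (by simp))
      · rw [inv_inv, rF1' X Y rel1 rel2]; exact H.inv_mem (genH _ (by simp))

lemma Y_mem_norm : Y ∈ Subgroup.normalizer (H : Set Δ) := by
  rw [Subgroup.mem_normalizer_iff]
  intro h
  constructor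
  · intro hh
    refine conj_mem_H Y ?_ h hh
    rintro s (rfl | rfl | rfl)
    · rw [rq3 X Y rel1 rel2]; exact H.inv_mem (genH _ (by simp))
    · rw [show Y*Y^2*Y⁻¹ = Y^2 by (try simp only [pow_two]); group]
      exact genH _ (by simp)
    · rw [rF2 X Y rel1 rel2]; exact H.inv_mem (genH _ (by simp))
  · intro hh
    have h2 := conj_mem_H Y⁻¹ ?_ _ hh
    · rw [show Y⁻¹*(Y*h*Y⁻¹)*Y⁻¹⁻¹ = h by group] at h2
      exact h2
    · rintro s (rfl | rfl | rfl)
      · rw [inv_inv, rq' X Y rel1 rel2]; exact H.inv_mem (genH _ (by simp))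
      · rw [show Y⁻¹*Y^2*Y⁻¹⁻¹ = Y^2 by (try simp only [pow_two]); group]
        exact genH _ (by simp)
      · rw [inv_inv, rF2' X Y rel1 rel2]; exact H.inv_mem (genH _ (by simp))

instance normalH : H.Normal := by
  rw [← Subgroup.normalizer_eq_top_iff]
  rw [Subgroup.eq_top_iff']
  intro g
  exact PresentedGroup.generated_by deltaPRels (Subgroup.normalizer (H : Set Δ))
    (by intro j; fin_cases j; exacts [X_mem_norm, Y_mem_norm]) g

noncomputable def π : Δ →* Δ ⧸ H := QuotientGroup.mk' H

lemma hu2 : π X * π X = 1 := by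
  rw [← map_mul, ← pow_two]
  exact (QuotientGroup.eq_one_iff _).mpr (genH _ (by simp))

lemma hv2 : π Y * π Y = 1 := by
  rw [← map_mul, ← pow_two]
  exact (QuotientGroup.eq_one_iff _).mpr (genH _ (by simp))

lemma hz2 : (π X * π Y) * (π X * π Y) = 1 := by
  rw [← map_mul, ← map_mul, ← pow_two]
  exact (QuotientGroup.eq_one_iff _).mpr (genH _ (by simp))

lemma hui : (π X)⁻¹ = π X := inv_eq_of_mul_eq_one_left hu2
lemma hvi : (π Y)⁻¹ = π Y := inv_eq_of_mul_eq_one_left hv2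

lemma hvu : π Y * π X = π X * π Y := by
  have e : (π X * π Y)⁻¹ = π X * π Y := inv_eq_of_mul_eq_one_left hz2
  calc π Y * π X = (π Y)⁻¹ * (π X)⁻¹ := by rw [hui, hvi]
  _ = (π X * π Y)⁻¹ := by rw [mul_inv_rev]
  _ = π X * π Y := e

noncomputable def TT : Subgroup (Δ ⧸ H) where
  carrier := {1, π X, π Y, π X * π Y}
  one_mem' := by left; rfl
  mul_mem' := by
    have l1 : ∀ t, π X * (π X * t) = t := fun t => by rw [← mul_assoc, hu2, one_mul]
    have l2 : ∀ t, π Y * (π Y * t) = t := fun t => by rw [← mul_assoc, hv2, one_mul]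
    have l3 : ∀ t, π Y * (π X * t) = π X * (π Y * t) := fun t => by
      rw [← mul_assoc, hvu, mul_assoc]
    rintro a b (rfl | rfl | rfl | rfl) (rfl | rfl | rfl | rfl) <;>
      simp [Set.mem_insert_iff, mul_assoc, l1, l2, l3, hu2, hv2, hvu]
  inv_mem' := by
    rintro a (rfl | rfl | rfl | rfl)
    · simp
    · rw [hui]; right; left; rfl
    · rw [hvi]; right; right; left; rfl
    · have e : (π X * π Y)⁻¹ = π X * π Y := inv_eq_of_mul_eq_one_left hz2
      rw [e]; right; right; right; rfl

lemma quotT (g : Δ) : π g = 1 ∨ π g = π X ∨ π g = π Y ∨ π g = π X * π Y := by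
  have hmem : g ∈ TT.comap π := by
    refine PresentedGroup.generated_by deltaPRels (TT.comap π) ?_ g
    intro j
    fin_cases j
    · show π X ∈ TT; right; left; rfl
    · show π Y ∈ TT; right; right; left; rfl
  rcases hmem with h | h | h | h
  · exact Or.inl h
  · exact Or.inr (Or.inl h)
  · exact Or.inr (Or.inr (Or.inl h))
  · exact Or.inr (Or.inr (Or.inr h))

end Stmt8Aux

/-- `Monoid.IsTorsionFree` as it stood in the older Mathlib (removed since):
no non-identity element has finite order. -/
def Monoid.IsTorsionFree (G : Type*) [Monoid G] : Prop :=
  ∀ g : G, g ≠ 1 → ¬IsOfFinOrder g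

/-- The Promislow group `Δ_P` is torsion-free. -/
theorem stmt8 : Monoid.IsTorsionFree (PresentedGroup deltaPRels) := by
  intro g hg hfin
  obtain ⟨n, hnpos, hgn⟩ : ∃ n, 0 < n ∧ g ^ n = 1 :=
    ⟨orderOf g, hfin.orderOf_pos, pow_orderOf_eq_one g⟩
  have hn0 : (n : ℤ) ≠ 0 := Int.natCast_ne_zero.mpr hnpos.ne'
  open Stmt8Aux in
  rcases Stmt8Aux.quotT g with h | h | h | h
  · -- g ∈ H
    have hgH : g ∈ Stmt8Aux.H := (QuotientGroup.eq_one_iff g).mp h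
    obtain ⟨i, j, k, rfl⟩ := Stmt8Aux.repH g hgH
    rw [Stmt8Aux.ApowΔ] at hgn
    obtain ⟨hi, hj, hk⟩ := Stmt8Aux.keyA hgn
    have i0 : i = 0 := (mul_eq_zero.mp hi).resolve_left hn0
    have j0 : j = 0 := (mul_eq_zero.mp hj).resolve_left hn0
    have k0 : k = 0 := (mul_eq_zero.mp hk).resolve_left hn0
    exact hg (by rw [i0, j0, k0]; exact Stmt8Aux.AoneΔ)
  · -- g = X * A i j k
    obtain ⟨z, hzH, hzeq⟩ := (QuotientGroup.mk'_eq_mk' (N := Stmt8Aux.H)).mp h.symm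
    obtain ⟨i, j, k, rfl⟩ := Stmt8Aux.repH z hzH
    subst hzeq
    have hgg : (Stmt8Aux.X * Stmt8Aux.A i j k) * (Stmt8Aux.X * Stmt8Aux.A i j k)
        = Stmt8Aux.A (1+(i+i)) (0+(-j+j)) (0+(-k+k)) := by
      calc (X*A i j k)*(X*A i j k) = (X*X)*((X⁻¹*(A i j k)*X)*(A i j k)) := by group
      _ = (X*X)*((A i (-j) (-k))*(A i j k)) := by rw [Stmt8Aux.cXi]
      _ = A (1+(i+i)) (0+(-j+j)) (0+(-k+k)) := by
          rw [Stmt8Aux.AmulΔ, ← pow_two, Stmt8Aux.hA100, Stmt8Aux.AmulΔ]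
    have h3 : ((X*A i j k)*(X*A i j k))^n = 1 := by
      rw [← pow_two, ← pow_mul, mul_comm 2 n, pow_mul, hgn, one_pow]
    rw [hgg, Stmt8Aux.ApowΔ] at h3
    obtain ⟨hi, -, -⟩ := Stmt8Aux.keyA h3
    rcases mul_eq_zero.mp hi with h' | h'
    · exact hn0 h'
    · omega
  · -- g = Y * A i j k
    obtain ⟨z, hzH, hzeq⟩ := (QuotientGroup.mk'_eq_mk' (N := Stmt8Aux.H)).mp h.symm
    obtain ⟨i, j, k, rfl⟩ := Stmt8Aux.repH z hzH
    subst hzeq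
    have hgg : (Stmt8Aux.Y * Stmt8Aux.A i j k) * (Stmt8Aux.Y * Stmt8Aux.A i j k)
        = Stmt8Aux.A (0+(-i+i)) (1+(j+j)) (0+(-k+k)) := by
      calc (Y*A i j k)*(Y*A i j k) = (Y*Y)*((Y⁻¹*(A i j k)*Y)*(A i j k)) := by group
      _ = (Y*Y)*((A (-i) j (-k))*(A i j k)) := by rw [Stmt8Aux.cYi]
      _ = A (0+(-i+i)) (1+(j+j)) (0+(-k+k)) := by
          rw [Stmt8Aux.AmulΔ, ← pow_two, Stmt8Aux.hA010, Stmt8Aux.AmulΔ]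
    have h3 : ((Y*A i j k)*(Y*A i j k))^n = 1 := by
      rw [← pow_two, ← pow_mul, mul_comm 2 n, pow_mul, hgn, one_pow]
    rw [hgg, Stmt8Aux.ApowΔ] at h3
    obtain ⟨-, hj, -⟩ := Stmt8Aux.keyA h3
    rcases mul_eq_zero.mp hj with h' | h'
    · exact hn0 h'
    · omega
  · -- g = (X*Y) * A i j k
    rw [← map_mul] at h
    obtain ⟨z, hzH, hzeq⟩ := (QuotientGroup.mk'_eq_mk' (N := Stmt8Aux.H)).mp h.symm
    obtain ⟨i, j, k, rfl⟩ := Stmt8Aux.repH z hzH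
    subst hzeq
    have hgg : ((Stmt8Aux.X*Stmt8Aux.Y) * Stmt8Aux.A i j k) * ((Stmt8Aux.X*Stmt8Aux.Y) * Stmt8Aux.A i j k)
        = Stmt8Aux.A (0+(-i+i)) (0+(-j+j)) (1+(k+k)) := by
      calc ((X*Y)*A i j k)*((X*Y)*A i j k)
          = ((X*Y)*(X*Y))*(((X*Y)⁻¹*(A i j k)*(X*Y))*(A i j k)) := by group
      _ = ((X*Y)*(X*Y))*((A (-i) (-j) k)*(A i j k)) := by rw [Stmt8Aux.cZi]
      _ = A (0+(-i+i)) (0+(-j+j)) (1+(k+k)) := by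
          rw [Stmt8Aux.AmulΔ, ← pow_two, Stmt8Aux.hA001, Stmt8Aux.AmulΔ]
    have h3 : (((X*Y)*A i j k)*((X*Y)*A i j k))^n = 1 := by
      rw [← pow_two, ← pow_mul, mul_comm 2 n, pow_mul, hgn, one_pow]
    rw [hgg, Stmt8Aux.ApowΔ] at h3
    obtain ⟨-, -, hk⟩ := Stmt8Aux.keyA h3
    rcases mul_eq_zero.mp hk with h' | h'
    · exact hn0 h'
    · omega
end

section
/- Let $\Gamma$ be a torsion-free group and $N \trianglelefteq \Gamma$ a normal subgroup. If $N$ and $\Gamma/N$ are both diffuse, then $\Gamma$ is diffuse. -/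
/-- The set of extremal points of a subset `A` of a group: `a ∈ A` is extremal if for
every `g ≠ 1`, either `g a ∉ A` or `g⁻¹ a ∉ A`. -/
def ExtremalPoints {G : Type*} [Group G] (A : Set G) : Set G :=
  {a ∈ A | ∀ g : G, g ≠ 1 → g * a ∉ A ∨ g⁻¹ * a ∉ A}

/-- A group is diffuse if every finite subset with at least two elements has at least
two extremal points. -/
def IsDiffuse (G : Type*) [Group G] : Prop :=
  ∀ A : Set G, A.Finite → 2 ≤ Nat.card A → 2 ≤ Nat.card (ExtremalPoints A)

lemma mem_extremal_singleton {G : Type*} [Group G] (a : G) :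
    a ∈ ExtremalPoints ({a} : Set G) := by
  refine ⟨rfl, fun g hg => ?_⟩
  left
  intro h
  exact hg (by simpa [mul_eq_right] using h)

/-- In a diffuse group, every finite nonempty set has an extremal point. -/
lemma exists_extremal {G : Type*} [Group G] (hG : IsDiffuse G) (B : Set G)
    (hB : B.Finite) (hne : B.Nonempty) : ∃ b, b ∈ ExtremalPoints B := by
  by_cases hc : 2 ≤ Nat.card (ExtremalPoints B)
  · have : 0 < Nat.card (ExtremalPoints B) := by omega
    obtain ⟨⟨b, hb⟩⟩ := (Nat.card_pos_iff.mp this).1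
    exact ⟨b, hb⟩
  · by_cases hc2 : 2 ≤ Nat.card B
    · exact absurd (hG B hB hc2) hc
    · have h1 : B.ncard = 1 := by
        have h0 : 0 < B.ncard := (Set.ncard_pos hB).mpr hne
        have : Nat.card B = B.ncard := Nat.card_coe_set_eq B
        omega
      obtain ⟨b, rfl⟩ := Set.ncard_eq_one.mp h1
      exact ⟨b, mem_extremal_singleton b⟩

/-- Key lemma: extremal points of a fiber over an extremal point of the image
are extremal in `A`. -/
lemma fiber_extremal {Γ : Type*} [Group Γ] (N : Subgroup Γ) [N.Normal]
    (A : Set Γ) {x : Γ ⧸ N}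
    (hx : x ∈ ExtremalPoints ((QuotientGroup.mk : Γ → Γ ⧸ N) '' A))
    {a₀ : Γ} (hax : (QuotientGroup.mk a₀ : Γ ⧸ N) = x)
    {b : N} (hb : b ∈ ExtremalPoints {n : N | (n : Γ) * a₀ ∈ A}) :
    (b : Γ) * a₀ ∈ ExtremalPoints A := by
  obtain ⟨hbA, hbe⟩ := hb
  refine ⟨hbA, fun g hg => ?_⟩
  by_cases hgN : g ∈ N
  · have hg1 : (⟨g, hgN⟩ : N) ≠ 1 := fun h => hg (by simpa using congrArg Subtype.val h)
    rcases hbe ⟨g, hgN⟩ hg1 with h | h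
    · left; intro hmem; exact h (by simpa [mul_assoc] using hmem)
    · right; intro hmem; exact h (by simpa [mul_assoc] using hmem)
  · have hgq : (QuotientGroup.mk g : Γ ⧸ N) ≠ 1 := by
      simpa [QuotientGroup.eq_one_iff] using hgN
    obtain ⟨hxA, hxe⟩ := hx
    have himg : (QuotientGroup.mk ((b : Γ) * a₀) : Γ ⧸ N) = x := by
      have hb1 : (QuotientGroup.mk (b : Γ) : Γ ⧸ N) = 1 :=
        (QuotientGroup.eq_one_iff _).mpr b.2
      rw [QuotientGroup.mk_mul, hb1, one_mul, hax]
    rcases hxe (QuotientGroup.mk g) hgq with h | h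
    · left; intro hmem
      exact h ⟨g * ((b : Γ) * a₀), hmem, by rw [QuotientGroup.mk_mul, himg]⟩
    · right; intro hmem
      refine h ⟨g⁻¹ * ((b : Γ) * a₀), hmem, ?_⟩
      rw [QuotientGroup.mk_mul, himg, QuotientGroup.mk_inv]

lemma fiber_finite {Γ : Type*} [Group Γ] (N : Subgroup Γ)
    (A : Set Γ) (hA : A.Finite) (a₀ : Γ) :
    ({n : N | (n : Γ) * a₀ ∈ A}).Finite := by
  have : {n : N | (n : Γ) * a₀ ∈ A} = (fun n : N => (n : Γ) * a₀) ⁻¹' A := rfl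
  rw [this]
  apply Set.Finite.preimage _ hA
  intro n₁ _ n₂ _ h
  exact Subtype.ext (mul_right_cancel h)

/-- From an extremal point of the image, produce an extremal point of `A` above it. -/
lemma exists_extremal_above {Γ : Type*} [Group Γ] (N : Subgroup Γ) [N.Normal]
    (h1 : IsDiffuse N) (A : Set Γ) (hA : A.Finite) {x : Γ ⧸ N}
    (hx : x ∈ ExtremalPoints ((QuotientGroup.mk : Γ → Γ ⧸ N) '' A)) :
    ∃ a ∈ ExtremalPoints A, (QuotientGroup.mk a : Γ ⧸ N) = x := by
  obtain ⟨a₀, ha₀, hax⟩ := hx.1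
  set B : Set N := {n : N | (n : Γ) * a₀ ∈ A} with hB
  have hBne : B.Nonempty := ⟨1, by simpa [hB] using ha₀⟩
  obtain ⟨b, hb⟩ := exists_extremal h1 B (fiber_finite N A hA a₀) hBne
  refine ⟨(b : Γ) * a₀, fiber_extremal N A hx hax hb, ?_⟩
  rw [QuotientGroup.mk_mul, (QuotientGroup.eq_one_iff _).mpr b.2, one_mul, hax]

/-- If `Γ` is torsion-free, `N ⊴ Γ`, and both `N` and `Γ/N` are diffuse,
then `Γ` is diffuse. -/
theorem stmt11 (Γ : Type*) [Group Γ] (htf : Monoid.IsTorsionFree Γ)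
    (N : Subgroup Γ) [N.Normal]
    (h1 : IsDiffuse N) (h2 : IsDiffuse (Γ ⧸ N)) : IsDiffuse Γ := by
  intro A hA hcard
  have hcard' : 1 < A.ncard := by
    have := Nat.card_coe_set_eq A; omega
  have hEfin : (ExtremalPoints A).Finite := hA.subset (fun a ha => ha.1)
  have hAne : A.Nonempty := by
    obtain ⟨a, -, ha, -, -⟩ := (Set.one_lt_ncard_iff hA).mp hcard'
    exact ⟨a, ha⟩
  set Abar : Set (Γ ⧸ N) := (QuotientGroup.mk : Γ → Γ ⧸ N) '' A with hAbar
  have hAbarfin : Abar.Finite := hA.image _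
  rw [Nat.card_coe_set_eq]
  refine (Set.one_lt_ncard_iff hEfin).mpr ?_
  by_cases hc : 2 ≤ Nat.card Abar
  · obtain ⟨x₁, x₂, hx₁, hx₂, hne⟩ := by
      have h := h2 Abar hAbarfin hc
      have hEfin' : (ExtremalPoints Abar).Finite := hAbarfin.subset (fun a ha => ha.1)
      rw [Nat.card_coe_set_eq] at h
      exact (Set.one_lt_ncard_iff hEfin').mp h
    obtain ⟨a₁, ha₁, ha₁x⟩ := exists_extremal_above N h1 A hA hx₁
    obtain ⟨a₂, ha₂, ha₂x⟩ := exists_extremal_above N h1 A hA hx₂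
    exact ⟨a₁, a₂, ha₁, ha₂, fun h => hne (by rw [← ha₁x, ← ha₂x, h])⟩
  · -- Abar is a singleton
    obtain ⟨a₀, ha₀⟩ := hAne
    have hx0 : (QuotientGroup.mk a₀ : Γ ⧸ N) ∈ Abar := ⟨a₀, ha₀, rfl⟩
    have hsing : Abar = {(QuotientGroup.mk a₀ : Γ ⧸ N)} := by
      have h1' : Abar.ncard = 1 := by
        have h0 : 0 < Abar.ncard := (Set.ncard_pos hAbarfin).mpr ⟨_, hx0⟩
        have := Nat.card_coe_set_eq Abar
        omega
      obtain ⟨y, hy⟩ := Set.ncard_eq_one.mp h1'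
      rw [hy]; rw [hy] at hx0; simp at hx0; rw [hx0]
    have hx : (QuotientGroup.mk a₀ : Γ ⧸ N) ∈ ExtremalPoints Abar := by
      rw [hsing]; exact mem_extremal_singleton _
    set B : Set N := {n : N | (n : Γ) * a₀ ∈ A} with hB
    have hBfin : B.Finite := fiber_finite N A hA a₀
    -- A is the image of B under n ↦ n * a₀
    have hAeq : A = (fun n : N => (n : Γ) * a₀) '' B := by
      ext a
      constructor
      · intro ha
        have : (QuotientGroup.mk a : Γ ⧸ N) = QuotientGroup.mk a₀ := by
          have hmemA : (QuotientGroup.mk a : Γ ⧸ N) ∈ Abar := ⟨a, ha, rfl⟩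
          rw [hsing] at hmemA
          simpa using hmemA
        have hmem : a * a₀⁻¹ ∈ N := by
          have := QuotientGroup.eq.mp this.symm
          -- a₀⁻¹ * a ∈ N
          have hN : a₀⁻¹ * a ∈ N := this
          have := (Subgroup.Normal.mem_comm_iff ‹N.Normal›).mp hN
          simpa using this
        refine ⟨⟨a * a₀⁻¹, hmem⟩, ?_, by simp⟩
        show (a * a₀⁻¹) * a₀ ∈ A
        simpa using ha
      · rintro ⟨n, hn, rfl⟩
        exact hn
    have hBcard : 2 ≤ Nat.card B := by
      have hinj : Function.Injective (fun n : N => (n : Γ) * a₀) := by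
        intro n₁ n₂ h
        exact Subtype.ext (mul_right_cancel h)
      have : A.ncard = B.ncard := by
        rw [hAeq, Set.ncard_image_of_injective _ hinj]
      rw [Nat.card_coe_set_eq]
      omega
    obtain ⟨b₁, b₂, hb₁, hb₂, hbne⟩ := by
      have h := h1 B hBfin hBcard
      have hEfin' : (ExtremalPoints B).Finite := hBfin.subset (fun a ha => ha.1)
      rw [Nat.card_coe_set_eq] at h
      exact (Set.one_lt_ncard_iff hEfin').mp h
    refine ⟨(b₁ : Γ) * a₀, (b₂ : Γ) * a₀,
      fiber_extremal N A hx rfl hb₁, fiber_extremal N A hx rfl hb₂, ?_⟩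
    intro h
    exact hbne (Subtype.ext (mul_right_cancel h))
end

section
/- Let $G = C_2^k$ act diagonally on $\mathbb{Z}^n$, meaning there is a basis $e_1, \ldots, e_n$ with $g \cdot e_i = \pm e_i$ for all $g, i$. Suppose the fixed submodule $(\mathbb{Z}^n)^G$ is zero, and suppose for each index-2 subgroup $A \leq G$ the fixed submodule $(\mathbb{Z}^n)^A$ is nonzero. Then $n \geq 2^k - 1$. -/
/-- Let `C₂ᵏ` act diagonally on `ℤⁿ` via characters `ρᵢ`.  If the fixed
submodule of the whole group is zero but every index-2 subgroup has a nonzero fixed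
vector, then `n ≥ 2ᵏ - 1`. -/
theorem stmt15 (k n : ℕ) (ρ : Fin n → (Multiplicative (Fin k → ZMod 2) →* ℤˣ))
    (hfix : ∀ v : Fin n → ℤ,
      (∀ g, (fun i => (ρ i g : ℤ) * v i) = v) → v = 0)
    (hA : ∀ A : Subgroup (Multiplicative (Fin k → ZMod 2)), A.index = 2 →
      ∃ v : Fin n → ℤ, v ≠ 0 ∧ ∀ g ∈ A, (fun i => (ρ i g : ℤ) * v i) = v) :
    2 ^ k - 1 ≤ n := by
  classical
  have two : ∀ x : ZMod 2, x = 0 ∨ x = 1 := by decide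
  set χ : (Fin k → ZMod 2) → ((Fin k → ZMod 2) →+ ZMod 2) := fun w =>
    { toFun := fun g => ∑ i, w i * g i
      map_zero' := by simp
      map_add' := by intro a b; simp [mul_add, Finset.sum_add_distrib] } with hχ
  have sumsingle : ∀ (u : Fin k → ZMod 2) (i : Fin k) (c : ZMod 2),
      χ u (Pi.single i c) = u i * c := by
    intro u i c
    simp only [hχ, AddMonoidHom.coe_mk, ZeroHom.coe_mk]
    rw [Finset.sum_eq_single i]
    · simp
    · intro b _ hb; simp [Pi.single_eq_of_ne hb]
    · simp
  have triv : ∀ j : Fin n, (∀ g, ρ j g = 1) → False := by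
    intro j h
    have := hfix (Pi.single j 1) (by
      intro g
      funext i
      by_cases hij : i = j
      · subst hij; simp [h g]
      · simp [Pi.single_eq_of_ne hij])
    have := congrFun this j
    simp at this
  have key : ∀ w : Fin k → ZMod 2, w ≠ 0 → ∃ j : Fin n,
      ∀ g : Fin k → ZMod 2, χ w g = 0 → ρ j (Multiplicative.ofAdd g) = 1 := by
    intro w hw
    set f := AddMonoidHom.toMultiplicative (χ w) with hf
    have fap : ∀ g : Fin k → ZMod 2,
        f (Multiplicative.ofAdd g) = Multiplicative.ofAdd (χ w g) := fun g => rfl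
    have hsurj : Function.Surjective f := by
      obtain ⟨i, hi⟩ := Function.ne_iff.mp hw
      have hwi : w i = 1 := (two (w i)).resolve_left (by simpa using hi)
      intro y
      refine ⟨Multiplicative.ofAdd (Pi.single i y.toAdd), ?_⟩
      rw [fap, sumsingle, hwi, one_mul]
      rfl
    have hidx : f.ker.index = 2 := by
      rw [Subgroup.index_ker, MonoidHom.range_eq_top.mpr hsurj,
        Nat.card_congr Subgroup.topEquiv.toEquiv]
      simp [Nat.card_eq_fintype_card]
    obtain ⟨v, hv0, hvfix⟩ := hA f.ker hidx
    obtain ⟨j, hj⟩ := Function.ne_iff.mp hv0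
    refine ⟨j, fun g hg => ?_⟩
    have hmem : Multiplicative.ofAdd g ∈ f.ker := by
      rw [MonoidHom.mem_ker, fap, hg]; rfl
    have hval : (ρ j (Multiplicative.ofAdd g) : ℤ) * v j = v j :=
      congrFun (hvfix _ hmem) j
    have hj' : v j ≠ 0 := by simpa using hj
    exact Units.ext (mul_right_cancel₀ hj' (by rw [hval, Units.val_one, one_mul]))
  choose jmap hjmap using key
  have hinj : Function.Injective (fun w : {w : Fin k → ZMod 2 // w ≠ 0} => jmap w.1 w.2) := by
    rintro ⟨w, hw⟩ ⟨w', hw'⟩ heq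
    simp only at heq
    by_contra hne
    have hne' : w ≠ w' := fun h => hne (by simpa using h)
    set j := jmap w hw with hj
    have h1 := hjmap w hw
    have h2 := heq ▸ hjmap w' hw'
    apply triv j
    intro g
    have hg : g = Multiplicative.ofAdd g.toAdd := rfl
    obtain ⟨i, hi⟩ := Function.ne_iff.mp hne'
    set x : Fin k → ZMod 2 := Pi.single i 1 with hx
    set a := g.toAdd with ha
    by_cases hca : χ w a = 0
    · rw [hg]; exact h1 _ hca
    by_cases hcb : χ w' a = 0
    · rw [hg]; exact h2 _ hcb
    have hca1 : χ w a = 1 := (two _).resolve_left hca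
    have hcb1 : χ w' a = 1 := (two _).resolve_left hcb
    have main : ∀ (u u' : Fin k → ZMod 2), u i = 1 → u' i = 0 →
        (∀ g, χ u g = 0 → ρ j (Multiplicative.ofAdd g) = 1) →
        (∀ g, χ u' g = 0 → ρ j (Multiplicative.ofAdd g) = 1) →
        χ u a = 1 → χ u' a = 1 → ρ j g = 1 := by
      intro u u' hu hu' H1 H2 ha1 ha2
      have hx2 : ρ j (Multiplicative.ofAdd x) = 1 := H2 x (by rw [hx, sumsingle, hu', zero_mul])
      have hax : ρ j (Multiplicative.ofAdd (a + x)) = 1 := H1 (a + x) (by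
        rw [map_add, ha1, hx, sumsingle, hu, mul_one]
        decide)
      have hmul : ρ j (Multiplicative.ofAdd (a + x)) =
          ρ j (Multiplicative.ofAdd a) * ρ j (Multiplicative.ofAdd x) := by
        rw [← map_mul]; rfl
      rw [hmul, hx2, mul_one] at hax
      rw [hg]; exact hax
    have hcases : (w i = 1 ∧ w' i = 0) ∨ (w i = 0 ∧ w' i = 1) := by
      rcases two (w i) with h1' | h1' <;> rcases two (w' i) with h2' | h2'
      · exact absurd (h1'.trans h2'.symm) hi
      · exact Or.inr ⟨h1', h2'⟩
      · exact Or.inl ⟨h1', h2'⟩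
      · exact absurd (h1'.trans h2'.symm) hi
    rcases hcases with ⟨hu, hu'⟩ | ⟨hu, hu'⟩
    · exact main w w' hu hu' h1 h2 hca1 hcb1
    · exact main w' w hu' hu h2 h1 hcb1 hca1
  have hcard := Fintype.card_le_of_injective _ hinj
  have hc : Fintype.card {w : Fin k → ZMod 2 // w ≠ 0} = 2 ^ k - 1 := by
    rw [Fintype.card_subtype_compl]
    simp
  rw [hc, Fintype.card_fin] at hcard
  exact hcard
end
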